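/- Let (I, E) be a finite simple graph, Φ : I → ℝ, and let BS(ρ) := Σ_{{i,j}∈E} [ F(ρ_j − ρ_i) + F(ρ_i − ρ_j) − (π/2)(ρ_i + ρ_j) ] + Σ_{i∈I} Φ_i ρ_i with F(x) := ∫_{−∞}^{x} arctan(e^t) dt. Suppose there exists a coherent angle system, i.e., numbers φ_{ij} > 0 for each ordered pair (i,j) with {i,j} ∈ E such that φ_{ij} + φ_{ji} = π/2 for each edge and Σ_{j : {i,j}∈E} 2·φ_{ij} = Φ_i for each i ∈ I, and set ε₀ := min over all ordered pairs of φ_{ij}. Then BS(ρ) ≥ 2·ε₀ · Σ_{{i,j}∈E} |ρ_i − ρ_j| for every ρ ∈ ℝ^I, with strict inequality whenever E is nonempty. -/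

import Mathlib

noncomputable section

open MeasureTheory Real Finset

set_option maxHeartbeats 1000000

/-- `F x = ∫_{-∞}^x arctan (e^t) dt`. -/
def Fint (x : ℝ) : ℝ := ∫ t in Set.Iio x, Real.arctan (Real.exp t)

lemma arctan_exp_pos (t : ℝ) : 0 < Real.arctan (Real.exp t) := by
  have := Real.arctan_strictMono (Real.exp_pos t)
  rwa [Real.arctan_zero] at this

lemma arctan_exp_le (t : ℝ) : Real.arctan (Real.exp t) ≤ Real.exp t := by
  have h1 : 0 ≤ Real.arctan (Real.exp t) := (arctan_exp_pos t).le
  have h2 : Real.arctan (Real.exp t) < Real.pi / 2 := Real.arctan_lt_pi_div_two _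
  have := Real.le_tan h1 h2
  rwa [Real.tan_arctan] at this

lemma integrableOn_arctan_exp (x : ℝ) :
    IntegrableOn (fun t => Real.arctan (Real.exp t)) (Set.Iic x) := by
  refine (integrableOn_exp_Iic x).mono' ?_ ?_
  · exact (Real.continuous_arctan.comp Real.continuous_exp).aestronglyMeasurable
  · filter_upwards with t
    rw [Real.norm_eq_abs, abs_of_nonneg (arctan_exp_pos t).le]
    exact arctan_exp_le t

lemma Fint_eq_Iic (x : ℝ) :
    Fint x = ∫ t in Set.Iic x, Real.arctan (Real.exp t) :=
  setIntegral_congr_set Iio_ae_eq_Iic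

lemma Fint_pos (x : ℝ) : 0 < Fint x := by
  rw [Fint_eq_Iic]
  rw [setIntegral_pos_iff_support_of_nonneg_ae
    (Filter.Eventually.of_forall fun t => (arctan_exp_pos t).le)
    (integrableOn_arctan_exp x)]
  have hsupp : (Function.support fun t => Real.arctan (Real.exp t)) = Set.univ := by
    ext t; simp [Function.mem_support, (arctan_exp_pos t).ne']
  rw [hsupp, Set.univ_inter]
  simp [Real.volume_Iic]

lemma arctan_exp_add (t : ℝ) :
    Real.arctan (Real.exp t) + Real.arctan (Real.exp (-t)) = Real.pi / 2 := by
  rw [Real.exp_neg, Real.arctan_inv_of_pos (Real.exp_pos t)]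
  ring

lemma Fint_sub (x : ℝ) : Fint x - Fint (-x) = Real.pi / 2 * x := by
  have hint : ∀ a b : ℝ, IntervalIntegrable (fun t => Real.arctan (Real.exp t))
      MeasureTheory.volume a b :=
    fun a b => (Real.continuous_arctan.comp Real.continuous_exp).intervalIntegrable a b
  have h1 : Fint x - Fint (-x) = ∫ t in (-x)..x, Real.arctan (Real.exp t) := by
    rw [Fint_eq_Iic, Fint_eq_Iic]
    exact intervalIntegral.integral_Iic_sub_Iic (integrableOn_arctan_exp (-x))
      (integrableOn_arctan_exp x)
  have h2 : (∫ t in (-x)..x, Real.arctan (Real.exp (-t)))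
      = ∫ t in (-x)..x, Real.arctan (Real.exp t) := by
    have := intervalIntegral.integral_comp_neg (a := -x) (b := x)
      (fun t => Real.arctan (Real.exp t))
    simpa using this
  have h3 : (∫ t in (-x)..x, Real.arctan (Real.exp t))
      + ∫ t in (-x)..x, Real.arctan (Real.exp t) = Real.pi * x := by
    nth_rewrite 2 [← h2]
    rw [← intervalIntegral.integral_add (hint _ _)]
    · have : ∀ t : ℝ, Real.arctan (Real.exp t) + Real.arctan (Real.exp (-t))
          = Real.pi / 2 := arctan_exp_add
      rw [intervalIntegral.integral_congr (g := fun _ => Real.pi / 2)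
        (fun t _ => this t)]
      rw [intervalIntegral.integral_const, smul_eq_mul]
      ring
    · exact (Real.continuous_arctan.comp
        (Real.continuous_exp.comp continuous_neg)).intervalIntegrable (μ := volume) (-x) x
  rw [h1]; linarith

/-- Per-edge strict positivity. -/
lemma key_ineq (a b ε x : ℝ) (hab : a + b = Real.pi / 2)
    (hεa : ε ≤ a) (hεb : ε ≤ b) :
    2 * ε * |x| < Fint x + Fint (-x) + (b - a) * x := by
  have h1 := Fint_sub x
  have h2 := Fint_pos x
  have h3 := Fint_pos (-x)
  rcases le_or_gt 0 x with hx | hx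
  · rw [abs_of_nonneg hx]
    nlinarith
  · rw [abs_of_neg hx]
    nlinarith

section Comb

variable {I : Type*} [Fintype I] [DecidableEq I]
  (G : SimpleGraph I) [DecidableRel G.Adj]

/-- Sum over ordered adjacent pairs equals sum over edges of the symmetrized function. -/
lemma sum_neighbors_eq (f : I → I → ℝ) :
    ∑ i, ∑ j ∈ G.neighborFinset i, f i j
      = ∑ e ∈ G.edgeFinset,
          Sym2.lift ⟨fun i j => f i j + f j i, fun i j => by ring⟩ e := by
  classical
  set s : Finset (I × I) := Finset.univ.filter (fun p => G.Adj p.1 p.2) with hs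
  have hA : ∑ i, ∑ j ∈ G.neighborFinset i, f i j = ∑ p ∈ s, f p.1 p.2 := by
    rw [hs, Finset.sum_filter, Fintype.sum_prod_type]
    refine Finset.sum_congr rfl fun i _ => ?_
    rw [SimpleGraph.neighborFinset_eq_filter, Finset.sum_filter]
  have hmaps : ∀ p ∈ s, s(p.1, p.2) ∈ G.edgeFinset := by
    intro p hp
    rw [hs, Finset.mem_filter] at hp
    rw [SimpleGraph.mem_edgeFinset]
    exact hp.2
  rw [hA, ← Finset.sum_fiberwise_of_maps_to hmaps (fun p => f p.1 p.2)]
  refine Finset.sum_congr rfl fun e he => ?_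
  rw [SimpleGraph.mem_edgeFinset] at he
  induction e with
  | _ i j =>
    have hadj : G.Adj i j := he
    have hne : i ≠ j := hadj.ne
    have hfib : s.filter (fun p => s(p.1, p.2) = s(i, j)) = {(i, j), (j, i)} := by
      ext p
      rcases p with ⟨u, v⟩
      simp only [hs, Finset.mem_filter, Finset.mem_univ, true_and, Finset.mem_insert,
        Finset.mem_singleton, Prod.mk.injEq, Sym2.mk_eq_mk_iff, Sym2.eq_iff, Prod.swap_prod_mk]
      constructor
      · rintro ⟨_, (⟨rfl, rfl⟩ | ⟨rfl, rfl⟩)⟩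
        · exact Or.inl ⟨rfl, rfl⟩
        · exact Or.inr ⟨rfl, rfl⟩
      · rintro (⟨rfl, rfl⟩ | ⟨rfl, rfl⟩)
        · exact ⟨hadj, Or.inl ⟨rfl, rfl⟩⟩
        · exact ⟨hadj.symm, Or.inr ⟨rfl, rfl⟩⟩
    rw [hfib, Finset.sum_insert (by simp [hne]), Finset.sum_singleton, Sym2.lift_mk]

end Comb

/-- The Bobenko–Springborn functional
`BS(ρ) = Σ_{{i,j}∈E} [F(ρ_j-ρ_i) + F(ρ_i-ρ_j) - (π/2)(ρ_i+ρ_j)] + Σ_i Φ_i ρ_i`. -/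
def BS {I : Type*} [Fintype I] [DecidableEq I] (G : SimpleGraph I) [DecidableRel G.Adj]
    (Φ : I → ℝ) (ρ : I → ℝ) : ℝ :=
  (∑ e ∈ G.edgeFinset,
    Sym2.lift
      ⟨fun i j => Fint (ρ j - ρ i) + Fint (ρ i - ρ j) - Real.pi / 2 * (ρ i + ρ j),
       fun i j => by ring⟩ e)
  + ∑ i, Φ i * ρ i

/-- Coercivity of the Bobenko–Springborn functional: if there is a coherent angle system
`φ` with minimal angle `ε₀`, then `BS(ρ) ≥ 2 ε₀ Σ_{{i,j}∈E} |ρ_i - ρ_j|`, with strict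
inequality whenever the edge set is nonempty. -/
theorem BS_coercive {I : Type*} [Fintype I] [DecidableEq I]
    (G : SimpleGraph I) [DecidableRel G.Adj] (Φ : I → ℝ)
    (φ : I → I → ℝ) (ε₀ : ℝ)
    (hpos : ∀ i j, G.Adj i j → 0 < φ i j)
    (hangle : ∀ i j, G.Adj i j → φ i j + φ j i = Real.pi / 2)
    (hΦ : ∀ i, ∑ j ∈ G.neighborFinset i, 2 * φ i j = Φ i)
    (hmin : IsLeast {t : ℝ | ∃ i j, G.Adj i j ∧ t = φ i j} ε₀) :
    ∀ ρ : I → ℝ,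
      2 * ε₀ * (∑ e ∈ G.edgeFinset,
          Sym2.lift ⟨fun i j => |ρ i - ρ j|, fun i j => abs_sub_comm (ρ i) (ρ j)⟩ e)
        ≤ BS G Φ ρ ∧
      (G.edgeFinset.Nonempty →
        2 * ε₀ * (∑ e ∈ G.edgeFinset,
            Sym2.lift ⟨fun i j => |ρ i - ρ j|, fun i j => abs_sub_comm (ρ i) (ρ j)⟩ e)
          < BS G Φ ρ) := by
  intro ρ
  -- lower bound property of ε₀
  have hεle : ∀ i j, G.Adj i j → ε₀ ≤ φ i j := fun i j hij => hmin.2 ⟨i, j, hij, rfl⟩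
  -- the edge set is nonempty because ε₀ is attained
  have hne : G.edgeFinset.Nonempty := by
    obtain ⟨i, j, hij, -⟩ := hmin.1
    exact ⟨s(i, j), SimpleGraph.mem_edgeFinset.mpr hij⟩
  -- rewrite the vertex sum as an edge sum
  have hv : ∑ i, Φ i * ρ i
      = ∑ e ∈ G.edgeFinset,
          Sym2.lift ⟨fun i j => 2 * φ i j * ρ i + 2 * φ j i * ρ j,
            fun i j => by ring⟩ e := by
    have h1 : ∑ i, Φ i * ρ i = ∑ i, ∑ j ∈ G.neighborFinset i, 2 * φ i j * ρ i := by
      refine Finset.sum_congr rfl fun i _ => ?_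
      rw [← hΦ i, Finset.sum_mul]
    rw [h1, sum_neighbors_eq]
  -- key strict inequality per edge
  have hstrict :
      2 * ε₀ * (∑ e ∈ G.edgeFinset,
          Sym2.lift ⟨fun i j => |ρ i - ρ j|, fun i j => abs_sub_comm (ρ i) (ρ j)⟩ e)
        < BS G Φ ρ := by
    rw [BS, hv, ← Finset.sum_add_distrib, Finset.mul_sum]
    refine Finset.sum_lt_sum_of_nonempty hne ?_
    intro e he
    rw [SimpleGraph.mem_edgeFinset] at he
    induction e with
    | _ i j =>
      have hadj : G.Adj i j := he
      simp only [Sym2.lift_mk]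
      have hk := key_ineq (φ i j) (φ j i) ε₀ (ρ j - ρ i) (hangle i j hadj)
        (hεle i j hadj) (hεle j i hadj.symm)
      have habs : |ρ j - ρ i| = |ρ i - ρ j| := abs_sub_comm _ _
      have hneg : -(ρ j - ρ i) = ρ i - ρ j := by ring
      rw [habs, hneg] at hk
      have heq : Fint (ρ j - ρ i) + Fint (ρ i - ρ j) - Real.pi / 2 * (ρ i + ρ j)
          + (2 * φ i j * ρ i + 2 * φ j i * ρ j)
          = Fint (ρ j - ρ i) + Fint (ρ i - ρ j) + (φ j i - φ i j) * (ρ j - ρ i) := by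
        rw [← hangle i j hadj]; ring
      rw [heq]
      exact hk
  exact ⟨hstrict.le, fun _ => hstrict⟩
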